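/- arXiv:1910.03845 — 3 statements merged into one kernel-verified Lean document; each statement's English description precedes it below -/
import Mathlib

section
/- Let f : M^{d×d} → [0,∞) be convex with f(0) = 0 and suppose there exist constants c₁, c₂ > 0 and p ∈ (1,∞) such that c₁|ζᵀ + ζ|^p ≤ f(ζ) ≤ c₂(|ζᵀ + ζ|^p + 1) for all d×d matrices ζ. Then f(ζ) = f((ζᵀ + ζ)/2) for every matrix ζ, i.e., f depends only on the symmetric part of its argument. -/
open Matrix

/-- The Frobenius norm of a real `d × d` matrix. -/
noncomputable def frobNorm {d : ℕ} (ζ : Matrix (Fin d) (Fin d) ℝ) : ℝ :=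
  Real.sqrt (∑ i, ∑ j, (ζ i j) ^ 2)

/-- A convex function bounded above along a line through `x` in direction `v`
satisfies `f (x + v) ≤ f x`. -/
lemma convex_bounded_dir {E : Type*} [AddCommGroup E] [Module ℝ E]
    (f : E → ℝ) (hconv : ConvexOn ℝ Set.univ f) (x v : E) (C : ℝ)
    (hb : ∀ u : ℝ, f (x + u • v) ≤ C) : f (x + v) ≤ f x := by
  apply le_of_forall_pos_le_add
  intro ε hε
  set u : ℝ := max 1 ((C - f x) / ε) with hu
  have hu1 : (1 : ℝ) ≤ u := le_max_left _ _
  have hu0 : 0 < u := lt_of_lt_of_le one_pos hu1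
  have ha : (0 : ℝ) ≤ 1 / u := by positivity
  have hb' : (0 : ℝ) ≤ 1 - 1 / u := by
    have : 1 / u ≤ 1 := by
      rw [div_le_one hu0]; exact hu1
    linarith
  have hab : 1 / u + (1 - 1 / u) = 1 := by ring
  have key := hconv.2 (Set.mem_univ (x + u • v)) (Set.mem_univ x) ha hb' hab
  have hcomb : (1 / u) • (x + u • v) + (1 - 1 / u) • x = x + v := by
    have h1 : (1 / u) * u = 1 := by field_simp
    rw [smul_add, smul_smul, h1]
    module
  rw [hcomb] at key
  simp only [smul_eq_mul] at key
  have hCx : f x ≤ C := by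
    have := hb 0
    simpa using this
  have huε : C - f x ≤ u * ε := by
    have h2 : (C - f x) / ε ≤ u := le_max_right _ _
    calc C - f x = ((C - f x) / ε) * ε := by field_simp
    _ ≤ u * ε := by nlinarith
  have : (1 / u) * f (x + u • v) + (1 - 1 / u) * f x ≤ f x + ε := by
    have h3 : f (x + u • v) ≤ C := hb u
    have h4 : (1 / u) * f (x + u • v) ≤ (1 / u) * C := by
      apply mul_le_mul_of_nonneg_left h3 ha
    have h5 : (1 / u) * C + (1 - 1 / u) * f x = f x + (C - f x) / u := by
      field_simp; ring
    have h6 : (C - f x) / u ≤ ε := by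
      rw [div_le_iff₀ hu0]; nlinarith
    linarith
  linarith

theorem stmt4 (d : ℕ) (f : Matrix (Fin d) (Fin d) ℝ → ℝ)
    (hconv : ConvexOn ℝ Set.univ f) (hf0 : f 0 = 0)
    (c₁ c₂ p : ℝ) (hc₁ : 0 < c₁) (hc₂ : 0 < c₂) (hp : 1 < p)
    (hnonneg : ∀ ζ, 0 ≤ f ζ)
    (hlow : ∀ ζ : Matrix (Fin d) (Fin d) ℝ, c₁ * (frobNorm (ζᵀ + ζ)) ^ p ≤ f ζ)
    (hupp : ∀ ζ : Matrix (Fin d) (Fin d) ℝ, f ζ ≤ c₂ * ((frobNorm (ζᵀ + ζ)) ^ p + 1)) :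
    ∀ ζ : Matrix (Fin d) (Fin d) ℝ, f ζ = f ((1/2 : ℝ) • (ζᵀ + ζ)) := by
  intro ζ
  set S : Matrix (Fin d) (Fin d) ℝ := (1/2 : ℝ) • (ζᵀ + ζ) with hSdef
  set N : Matrix (Fin d) (Fin d) ℝ := ζ - S with hNdef
  have hST : Sᵀ = S := by
    simp [hSdef, Matrix.transpose_smul, Matrix.transpose_add, add_comm]
  have hNT : Nᵀ = -N := by
    simp only [hNdef, Matrix.transpose_sub, hST, hSdef]
    ext i j
    simp [Matrix.sub_apply, Matrix.smul_apply, Matrix.add_apply, Matrix.neg_apply,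
      Matrix.transpose_apply]
    ring
  have h2S : S + S = ζᵀ + ζ := by
    ext i j
    simp [hSdef, Matrix.smul_apply, Matrix.add_apply]
    ring
  -- key: for any u and any skew direction v (v = N or -N), the symmetric part is unchanged
  have hsym : ∀ (u : ℝ) (v : Matrix (Fin d) (Fin d) ℝ), vᵀ = -v →
      (S + u • v)ᵀ + (S + u • v) = ζᵀ + ζ := by
    intro u v hv
    have ht : (S + u • v)ᵀ = S - u • v := by
      rw [Matrix.transpose_add, hST, Matrix.transpose_smul, hv, smul_neg, ← sub_eq_add_neg]
    rw [ht, ← h2S]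
    abel
  set C : ℝ := c₂ * ((frobNorm (ζᵀ + ζ)) ^ p + 1) with hCdef
  have hbound : ∀ (v : Matrix (Fin d) (Fin d) ℝ), vᵀ = -v →
      ∀ u : ℝ, f (S + u • v) ≤ C := by
    intro v hv u
    have := hupp (S + u • v)
    rwa [hsym u v hv] at this
  have hNT' : (-N)ᵀ = -(-N) := by rw [Matrix.transpose_neg, hNT, neg_neg]
  have h1 : f (S + N) ≤ f S :=
    convex_bounded_dir f hconv S N C (hbound N hNT)
  have h2 : f (S + (-N)) ≤ f S :=
    convex_bounded_dir f hconv S (-N) C (hbound (-N) hNT')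
  have hSN : S + N = ζ := by rw [hNdef]; abel
  rw [hSN] at h1
  -- midpoint convexity: f S ≤ ½ f ζ + ½ f (S - N)
  have hmid := hconv.2 (Set.mem_univ ζ) (Set.mem_univ (S + (-N)))
      (by norm_num : (0:ℝ) ≤ 1/2) (by norm_num : (0:ℝ) ≤ 1/2) (by norm_num)
  have hmidpt : (1/2 : ℝ) • ζ + (1/2 : ℝ) • (S + (-N)) = S := by
    rw [← hSN]
    ext i j
    simp [Matrix.add_apply, Matrix.smul_apply, Matrix.neg_apply]
    ring
  rw [hmidpt] at hmid
  simp only [smul_eq_mul] at hmid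
  have h3 : f S ≤ f ζ := by linarith
  linarith
end

section
/- Let Ω ⊆ ℝ^d have finite Lebesgue measure and let (u_n) be a sequence of measurable functions Ω → ℝ^N satisfying the Cauchy-in-measure-type condition: the Lebesgue measure of ∩_{n∈ℕ} ∪_{m≥n} {x : |u_m(x) − u_n(x)| > 1} equals 0. Then there exist a subsequence (not relabeled) and an increasing concave function ψ : [0,∞) → [0,∞) with ψ(t) → ∞ as t → ∞ such that sup_n ∫_Ω ψ(|u_n|) dx < ∞. -/
open MeasureTheory Filter Set
open scoped ENNReal NNReal Topology

noncomputable def psi7 (K : ℕ → ℕ) (t : ℝ) : ℝ := ∑' j, min (t / (K j : ℝ)) 1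

section psi
variable {K : ℕ → ℕ} (hK : ∀ j, 2 ^ j ≤ K j)
include hK

lemma Kpos7 (j : ℕ) : (0 : ℝ) < (K j : ℝ) := by
  have h := hK j
  have : (0:ℕ) < K j := lt_of_lt_of_le (Nat.pow_pos (n := j) (by norm_num)) h
  exact_mod_cast this

lemma abs_term_le7 (j : ℕ) (t : ℝ) : |min (t / (K j : ℝ)) 1| ≤ |t| * (1/2) ^ j := by
  have hKp := Kpos7 hK j
  have h2j : (2:ℝ) ^ j ≤ (K j : ℝ) := by exact_mod_cast hK j
  have key : |t| / (K j : ℝ) ≤ |t| * (1/2) ^ j := by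
    have : |t| / (K j : ℝ) ≤ |t| / (2:ℝ)^j :=
      div_le_div_of_nonneg_left (abs_nonneg t) (by positivity) h2j
    calc |t| / (K j : ℝ) ≤ |t| / (2:ℝ)^j := this
      _ = |t| * (1/2)^j := by rw [div_eq_mul_inv, ← inv_pow, one_div]
  rcases le_or_gt 0 t with ht | ht
  · have hmn : 0 ≤ min (t / (K j : ℝ)) 1 := le_min (by positivity) one_pos.le
    rw [abs_of_nonneg hmn]
    calc min (t / (K j : ℝ)) 1 ≤ t / (K j : ℝ) := min_le_left _ _
      _ = |t| / (K j : ℝ) := by rw [abs_of_nonneg ht]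
      _ ≤ _ := key
  · have : t / (K j : ℝ) < 1 := (div_neg_of_neg_of_pos ht hKp).trans one_pos
    rw [min_eq_left this.le, abs_div, abs_of_pos hKp]
    exact key

lemma psi7_summable (t : ℝ) : Summable (fun j => min (t / (K j : ℝ)) 1) := by
  have hgeo : Summable (fun j : ℕ => |t| * (1/2:ℝ) ^ j) :=
    (summable_geometric_of_lt_one (by norm_num) (by norm_num)).mul_left _
  exact Summable.of_abs (hgeo.of_nonneg_of_le (fun j => abs_nonneg _)
    (fun j => abs_term_le7 hK j t))

lemma psi7_mono : Monotone (psi7 K) := by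
  intro s t hst
  refine Summable.tsum_le_tsum (fun j => ?_) (psi7_summable hK s) (psi7_summable hK t)
  exact min_le_min (div_le_div_of_nonneg_right hst (Kpos7 hK j).le) le_rfl

omit hK in lemma psi7_nonneg {t : ℝ} (ht : 0 ≤ t) : 0 ≤ psi7 K t := by
  refine tsum_nonneg (fun j => le_min (by positivity) one_pos.le)

lemma psi7_concave : ConcaveOn ℝ (Set.Ici (0:ℝ)) (psi7 K) := by
  refine ⟨convex_Ici 0, fun x hx y hy a b ha hb hab => ?_⟩
  simp only [smul_eq_mul]
  have hsx := psi7_summable hK (K := K) x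
  have hsy := psi7_summable hK (K := K) y
  have h1 : a * psi7 K x + b * psi7 K y
      = ∑' j, (a * min (x / (K j : ℝ)) 1 + b * min (y / (K j : ℝ)) 1) := by
    rw [psi7, psi7, ← tsum_mul_left, ← tsum_mul_left]
    exact (Summable.tsum_add (hsx.mul_left a) (hsy.mul_left b)).symm
  rw [h1]
  refine Summable.tsum_le_tsum (fun j => ?_) ((hsx.mul_left a).add (hsy.mul_left b))
    (psi7_summable hK _)
  have hKp := Kpos7 hK j
  refine le_min ?_ ?_
  · have h1' : a * min (x / (K j : ℝ)) 1 ≤ a * (x / (K j : ℝ)) :=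
      mul_le_mul_of_nonneg_left (min_le_left _ _) ha
    have h2' : b * min (y / (K j : ℝ)) 1 ≤ b * (y / (K j : ℝ)) :=
      mul_le_mul_of_nonneg_left (min_le_left _ _) hb
    calc a * min (x / (K j : ℝ)) 1 + b * min (y / (K j : ℝ)) 1
        ≤ a * (x / (K j : ℝ)) + b * (y / (K j : ℝ)) := add_le_add h1' h2'
      _ = (a * x + b * y) / (K j : ℝ) := by ring
  · calc a * min (x / (K j : ℝ)) 1 + b * min (y / (K j : ℝ)) 1
        ≤ a * 1 + b * 1 := add_le_add (mul_le_mul_of_nonneg_left (min_le_right _ _) ha)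
          (mul_le_mul_of_nonneg_left (min_le_right _ _) hb)
      _ = 1 := by rw [mul_one, mul_one, hab]

lemma psi7_tendsto (hKmono : Monotone K) : Tendsto (psi7 K) atTop atTop := by
  rw [tendsto_atTop]
  intro b
  filter_upwards [eventually_ge_atTop ((K ⌈b⌉₊ : ℝ))] with t ht
  set J := ⌈b⌉₊ with hJ
  have htnn : 0 ≤ t := le_trans (Kpos7 hK J).le ht
  have hsum : ∑ j ∈ Finset.range J, min (t / (K j : ℝ)) 1 ≤ psi7 K t :=
    Summable.sum_le_tsum _ (fun j _ => le_min (by positivity) one_pos.le) (psi7_summable hK t)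
  have heq : ∀ j ∈ Finset.range J, min (t / (K j : ℝ)) 1 = 1 := by
    intro j hj
    have hKj : (K j : ℝ) ≤ (K J : ℝ) := by
      exact_mod_cast hKmono (Finset.mem_range.mp hj).le
    have : 1 ≤ t / (K j : ℝ) := (one_le_div (Kpos7 hK j)).mpr (le_trans hKj ht)
    exact min_eq_right this
  calc b ≤ (J : ℝ) := Nat.le_ceil b
    _ = ∑ j ∈ Finset.range J, min (t / (K j : ℝ)) 1 := by
        rw [Finset.sum_congr rfl heq]; simp
    _ ≤ psi7 K t := hsum

end psi
theorem stmt7 (d N : ℕ) (Ω : Set (EuclideanSpace ℝ (Fin d))) (hΩ : MeasurableSet Ω)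
    (hfin : volume Ω < ⊤)
    (u : ℕ → EuclideanSpace ℝ (Fin d) → EuclideanSpace ℝ (Fin N))
    (hmeas : ∀ n, Measurable (u n))
    (hcauchy : volume (⋂ n, ⋃ m, ⋃ _ : n ≤ m, {x ∈ Ω | 1 < ‖u m x - u n x‖}) = 0) :
    ∃ σ : ℕ → ℕ, StrictMono σ ∧ ∃ ψ : ℝ → ℝ,
      MonotoneOn ψ (Set.Ici 0) ∧ ConcaveOn ℝ (Set.Ici 0) ψ ∧ (∀ t, 0 ≤ t → 0 ≤ ψ t) ∧
      Tendsto ψ atTop atTop ∧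
      ∃ C : ℝ, ∀ n, (∫ x in Ω, ψ ‖u (σ n) x‖) ≤ C := by
  -- the pointwise supremum
  set g : EuclideanSpace ℝ (Fin d) → ℝ≥0∞ := fun x => ⨆ n, (‖u n x‖₊ : ℝ≥0∞) with hg
  have hg_meas : Measurable g :=
    Measurable.iSup (fun n => (hmeas n).nnnorm.coe_nnreal_ennreal)
  have hgle : ∀ n x, (‖u n x‖₊ : ℝ≥0∞) ≤ g x := fun n x => le_iSup (fun n => (‖u n x‖₊ : ℝ≥0∞)) n
  -- a.e. finiteness of g on Ω
  have hnull : volume {x | x ∈ Ω ∧ g x = ⊤} = 0 := by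
    refine measure_mono_null ?_ hcauchy
    rintro x ⟨hxΩ, hgx⟩
    have hub : ∀ r : ℝ≥0, ∃ m, r < ‖u m x‖₊ := by
      intro r
      by_contra h
      push_neg at h
      have : g x ≤ (r : ℝ≥0∞) := iSup_le (fun m => ENNReal.coe_le_coe.mpr (h m))
      rw [hgx] at this
      exact (ENNReal.coe_lt_top.trans_le this).false
    simp only [mem_iInter, mem_iUnion]
    intro n
    obtain ⟨m, hm⟩ := hub ((Finset.range (n+1)).sup (fun m => ‖u m x‖₊) + ‖u n x‖₊ + 1)
    have hmn : n ≤ m := by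
      by_contra hc
      push_neg at hc
      have h1 : ‖u m x‖₊ ≤ (Finset.range (n+1)).sup (fun m => ‖u m x‖₊) :=
        Finset.le_sup (f := fun m => ‖u m x‖₊) (Finset.mem_range.mpr (hc.trans (Nat.lt_succ_self n)))
      have := lt_of_le_of_lt (le_add_right (le_add_right h1)) hm
      exact this.false
    refine ⟨m, hmn, hxΩ, ?_⟩
    have hmr : (‖u n x‖₊ : ℝ) + 1 ≤ ((Finset.range (n+1)).sup (fun m => ‖u m x‖₊) + ‖u n x‖₊ + 1 : ℝ≥0) := by
      push_cast
      have : (0:ℝ) ≤ (Finset.range (n+1)).sup (fun m => ‖u m x‖₊) := NNReal.coe_nonneg _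
      linarith
    have hm' : ((‖u n x‖₊ : ℝ) + 1) < (‖u m x‖₊ : ℝ) :=
      lt_of_le_of_lt hmr (by exact_mod_cast hm)
    have h2 : ‖u m x‖ - ‖u n x‖ ≤ ‖u m x - u n x‖ := norm_sub_norm_le _ _
    rw [coe_nnnorm, coe_nnnorm] at hm'
    linarith
  -- the superlevel sets
  set S : ℕ → Set (EuclideanSpace ℝ (Fin d)) := fun k => {x | x ∈ Ω ∧ (k : ℝ≥0∞) < g x} with hS
  have hS_meas : ∀ k, MeasurableSet (S k) := by
    intro k
    exact hΩ.inter (hg_meas measurableSet_Ioi)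
  have hS_anti : Antitone S := by
    intro k k' hkk' x hx
    exact ⟨hx.1, lt_of_le_of_lt (by exact_mod_cast Nat.cast_le.mpr hkk') hx.2⟩
  have hS_inter : ⋂ k, S k = {x | x ∈ Ω ∧ g x = ⊤} := by
    ext x
    simp only [mem_iInter, mem_setOf_eq]
    constructor
    · intro h
      refine ⟨(h 0).1, ?_⟩
      by_contra hc
      obtain ⟨k, hk⟩ := ENNReal.exists_nat_gt hc
      exact (lt_irrefl _ ((h k).2.trans hk))
    · intro ⟨h1, h2⟩ k
      exact ⟨h1, h2 ▸ ENNReal.coe_lt_top.trans_le (by simp [h2])⟩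
  have htend : Tendsto (fun k => volume (S k)) atTop (𝓝 0) := by
    have h := tendsto_measure_iInter_atTop (μ := volume) (fun k => (hS_meas k).nullMeasurableSet)
      hS_anti ⟨0, (lt_of_le_of_lt (measure_mono (fun x hx => hx.1)) hfin).ne⟩
    rw [hS_inter, hnull] at h
    exact h
  -- select the thresholds
  have hsel : ∀ j : ℕ, ∃ k : ℕ, volume (S k) ≤ 2⁻¹ ^ j := by
    intro j
    have hpos : (0:ℝ≥0∞) < 2⁻¹ ^ j := ENNReal.pow_pos (by norm_num) j
    exact ((htend.eventually_lt_const hpos).exists).imp (fun k hk => hk.le)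
  choose e he using hsel
  -- recursive thresholds
  set K : ℕ → ℕ := fun j => Nat.rec (e 0 + 1) (fun i Ki => max (e (i+1)) (2^(i+1) * Ki) + 1) j
    with hKdef
  have hK0 : K 0 = e 0 + 1 := rfl
  have hKsucc : ∀ j, K (j+1) = max (e (j+1)) (2^(j+1) * K j) + 1 := fun j => rfl
  have hKe : ∀ j, e j ≤ K j := by
    intro j
    cases j with
    | zero => simp [hK0]
    | succ i => rw [hKsucc]; exact le_trans (le_max_left _ _) (Nat.le_succ _)
  have hKgrow : ∀ j, 2^(j+1) * K j ≤ K (j+1) := by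
    intro j
    rw [hKsucc]
    exact le_trans (le_max_right _ _) (Nat.le_succ _)
  have hK2 : ∀ j, 2 ^ j ≤ K j := by
    intro j
    induction j with
    | zero => simp [hK0]
    | succ i ih =>
      have h1 : 1 ≤ K i := le_trans (Nat.one_le_two_pow) ih
      calc 2 ^ (i+1) = 2^(i+1) * 1 := (mul_one _).symm
        _ ≤ 2^(i+1) * K i := Nat.mul_le_mul_left _ h1
        _ ≤ K (i+1) := hKgrow i
  have hKpos : ∀ j, 1 ≤ K j := fun j => le_trans Nat.one_le_two_pow (hK2 j)
  have hKmono : Monotone K := by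
    apply monotone_nat_of_le_succ
    intro j
    calc K j = 1 * K j := (one_mul _).symm
      _ ≤ 2^(j+1) * K j := Nat.mul_le_mul_right _ (Nat.one_le_two_pow)
      _ ≤ K (j+1) := hKgrow j
  have hFK : ∀ j, volume (S (K j)) ≤ 2⁻¹ ^ j :=
    fun j => (measure_mono (hS_anti (hKe j))).trans (he j)
  -- the function ψ
  refine ⟨id, strictMono_id, psi7 K, (psi7_mono hK2).monotoneOn _, psi7_concave hK2,
    fun t ht => psi7_nonneg ht, psi7_tendsto hK2 hKmono, ?_⟩
  have hCtop : (volume Ω + 2) * 2 ≠ ⊤ :=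
    ENNReal.mul_ne_top (ENNReal.add_ne_top.mpr ⟨hfin.ne, by norm_num⟩) (by norm_num)
  refine ⟨((volume Ω + 2) * 2).toReal, fun n => ?_⟩
  simp only [id_eq]
  have htm : ∀ j, Monotone (fun t : ℝ => min (t / (K j : ℝ)) 1) := fun j s t hst =>
    min_le_min (div_le_div_of_nonneg_right hst (Kpos7 hK2 j).le) le_rfl
  have hmeasψ : Measurable (fun x => psi7 K ‖u n x‖) :=
    (psi7_mono hK2).measurable.comp (hmeas n).norm
  have hnn : ∀ x, 0 ≤ psi7 K ‖u n x‖ := fun x => psi7_nonneg (norm_nonneg _)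
  rw [integral_eq_lintegral_of_nonneg_ae (Filter.Eventually.of_forall hnn)
    hmeasψ.aestronglyMeasurable]
  refine ENNReal.toReal_mono hCtop ?_
  have hhalf : ∀ m : ℕ, ENNReal.ofReal ((1/2:ℝ)^m) = 2⁻¹ ^ m := by
    intro m
    rw [ENNReal.ofReal_pow (by norm_num)]
    congr 1
    rw [one_div, ENNReal.ofReal_inv_of_pos (by norm_num), ENNReal.ofReal_ofNat]
  have hper : ∀ j, (∫⁻ x in Ω, ENNReal.ofReal (min (‖u n x‖ / (K j : ℝ)) 1))
      ≤ (volume Ω + 2) * 2⁻¹ ^ j := by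
    intro j
    cases j with
    | zero =>
      calc (∫⁻ x in Ω, ENNReal.ofReal (min (‖u n x‖ / (K 0 : ℝ)) 1))
          ≤ ∫⁻ _ in Ω, 1 := by
            refine lintegral_mono (fun x => ?_)
            rw [← ENNReal.ofReal_one]
            exact ENNReal.ofReal_le_ofReal (min_le_right _ _)
        _ = volume Ω := setLIntegral_one Ω
        _ ≤ (volume Ω + 2) * 2⁻¹ ^ 0 := by simpa using le_self_add
    | succ i =>
      have hKip := Kpos7 hK2 (K := K) i
      have hptw : ∀ x ∈ Ω, ENNReal.ofReal (min (‖u n x‖ / (K (i+1) : ℝ)) 1)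
          ≤ (S (K i)).indicator (fun _ => 1) x + ENNReal.ofReal ((1/2:ℝ)^(i+1)) := by
        intro x hxΩ
        rcases le_or_gt (‖u n x‖) (K i : ℝ) with h1 | h2
        · have hb : min (‖u n x‖ / (K (i+1) : ℝ)) 1 ≤ (1/2:ℝ)^(i+1) := by
            refine (min_le_left _ _).trans ?_
            have hgr : ((2:ℝ)^(i+1) * (K i : ℝ)) ≤ (K (i+1) : ℝ) := by
              exact_mod_cast hKgrow i
            have hKine : (K i : ℝ) ≠ 0 := hKip.ne'
            calc ‖u n x‖ / (K (i+1) : ℝ) ≤ (K i : ℝ) / ((2:ℝ)^(i+1) * (K i : ℝ)) :=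
                div_le_div₀ hKip.le h1 (by positivity) hgr
              _ = (1/2:ℝ)^(i+1) := by
                rw [div_pow, one_pow]
                field_simp
          exact le_add_self.trans' (ENNReal.ofReal_le_ofReal hb)
        · have hxS : x ∈ S (K i) := by
            refine ⟨hxΩ, lt_of_lt_of_le ?_ (hgle n x)⟩
            exact_mod_cast h2
          rw [Set.indicator_of_mem hxS]
          refine le_trans ?_ le_self_add
          rw [← ENNReal.ofReal_one]
          exact ENNReal.ofReal_le_ofReal (min_le_right _ _)
      have hmeas_ind : Measurable fun x =>
          (S (K i)).indicator (fun _ => (1:ℝ≥0∞)) x + ENNReal.ofReal ((1/2:ℝ)^(i+1)) :=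
        ((measurable_const.indicator (hS_meas (K i))).add measurable_const)
      calc (∫⁻ x in Ω, ENNReal.ofReal (min (‖u n x‖ / (K (i+1) : ℝ)) 1))
          ≤ ∫⁻ x in Ω, ((S (K i)).indicator (fun _ => 1) x + ENNReal.ofReal ((1/2:ℝ)^(i+1))) :=
            setLIntegral_mono hmeas_ind hptw
        _ = (∫⁻ x in Ω, (S (K i)).indicator (fun _ => 1) x)
            + ENNReal.ofReal ((1/2:ℝ)^(i+1)) * volume Ω := by
            rw [lintegral_add_right _ measurable_const, lintegral_const,
              Measure.restrict_apply_univ]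
        _ ≤ volume (S (K i)) + 2⁻¹ ^ (i+1) * volume Ω := by
            rw [lintegral_indicator (hS_meas (K i)), setLIntegral_one,
              Measure.restrict_apply (hS_meas (K i)), hhalf]
            exact add_le_add (measure_mono inter_subset_left) le_rfl
        _ ≤ 2⁻¹ ^ i + 2⁻¹ ^ (i+1) * volume Ω := add_le_add (hFK i) le_rfl
        _ = (volume Ω + 2) * 2⁻¹ ^ (i+1) := by
            have h2 : (2:ℝ≥0∞) * 2⁻¹ ^ (i+1) = 2⁻¹ ^ i := by
              rw [pow_succ, mul_comm ((2:ℝ≥0∞)⁻¹ ^ i), ← mul_assoc,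
                ENNReal.mul_inv_cancel (by norm_num) (by norm_num), one_mul]
            rw [add_mul, h2, mul_comm (volume Ω), add_comm]
  calc (∫⁻ x in Ω, ENNReal.ofReal (psi7 K ‖u n x‖))
      = ∫⁻ x in Ω, ∑' j, ENNReal.ofReal (min (‖u n x‖ / (K j : ℝ)) 1) := by
        refine lintegral_congr (fun x => ?_)
        exact ENNReal.ofReal_tsum_of_nonneg (fun j => le_min (by positivity) one_pos.le)
          (psi7_summable hK2 _)
    _ = ∑' j, ∫⁻ x in Ω, ENNReal.ofReal (min (‖u n x‖ / (K j : ℝ)) 1) := by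
        refine lintegral_tsum (fun j => ?_)
        exact (ENNReal.measurable_ofReal.comp
          ((htm j).measurable.comp (hmeas n).norm)).aemeasurable
    _ ≤ ∑' j, (volume Ω + 2) * 2⁻¹ ^ j := ENNReal.tsum_le_tsum hper
    _ = (volume Ω + 2) * ∑' j, 2⁻¹ ^ j := ENNReal.tsum_mul_left
    _ = (volume Ω + 2) * 2 := by
        rw [ENNReal.tsum_geometric, ENNReal.one_sub_inv_two, inv_inv]
end

section
/- Let f : M^{d×d}_sym → [0,∞) be convex, let Ω ⊆ ℝ^d be open and bounded, and let (A, A_n) ⊆ Ω be measurable sets with χ_{A_n} → χ_A in L¹(Ω), and (e_n) ⊆ L^p(Ω; M^{d×d}_sym) with e_n χ_{A_n} ⇀ e χ_A weakly in L^p for some e ∈ L^p(Ω; M^{d×d}_sym), where p ∈ (1,∞) and f satisfies f(ζ) ≤ c(|ζ|^p + 1). Then ∫_A f(e) dx ≤ liminf_n ∫_{A_n} f(e_n) dx. -/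
set_option linter.unusedSectionVars false
set_option maxHeartbeats 1000000
open MeasureTheory Filter Set
open scoped ENNReal RealInnerProductSpace

section
variable {E : Type*} [NormedAddCommGroup E] [InnerProductSpace ℝ E] [FiniteDimensional ℝ E]

lemma exists_affine_lt {E : Type*} [NormedAddCommGroup E] [InnerProductSpace ℝ E]
    [FiniteDimensional ℝ E] {f : E → ℝ} (hconv : ConvexOn ℝ Set.univ f)
    (hcont : Continuous f) (x : E) {ε : ℝ} (hε : 0 < ε) :
    ∃ v c, (∀ y, ⟪v, y⟫ + c ≤ f y) ∧ f x - ε < ⟪v, x⟫ + c := by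
  set K : Set (E × ℝ) := {p | f p.1 ≤ p.2} with hK
  have hKconv : Convex ℝ K := by
    have := hconv.convex_epigraph
    simpa [hK] using this
  have hKclosed : IsClosed K :=
    isClosed_le (hcont.comp continuous_fst) continuous_snd
  have hq : (x, f x - ε) ∉ K := by simp [hK]; linarith
  obtain ⟨φ, u, hφq, hφK⟩ := geometric_hahn_banach_point_closed hKconv hKclosed hq
  set a : ℝ := φ (0, 1) with ha
  have hdecomp : ∀ y : E, ∀ t : ℝ, φ (y, t) = φ (y, 0) + t * a := by
    intro y t
    have : (y, t) = (y, 0) + t • ((0 : E), (1 : ℝ)) := by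
      simp [Prod.ext_iff]
    rw [this, map_add, φ.map_smul, smul_eq_mul, ha]
  have hax : φ (x, f x - ε) < u := hφq
  have haxf : u < φ (x, f x) := hφK _ (by simp [hK])
  have hapos : 0 < a := by
    have h1 := hdecomp x (f x - ε)
    have h2 := hdecomp x (f x)
    nlinarith
  set ψ : E →L[ℝ] ℝ := φ.comp (ContinuousLinearMap.inl ℝ E ℝ) with hψ
  have hψval : ∀ y, ψ y = φ (y, 0) := fun y => rfl
  set v : E := (-(1/a)) • (InnerProductSpace.toDual ℝ E).symm ψ with hv
  have hvval : ∀ y, ⟪v, y⟫ = -(1/a) * φ (y, 0) := by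
    intro y
    rw [hv, inner_smul_left]
    simp [InnerProductSpace.toDual_symm_apply, hψval]
  refine ⟨v, u / a, fun y => ?_, ?_⟩
  · have h := hφK (y, f y) (by simp [hK])
    rw [hdecomp y (f y)] at h
    rw [hvval, show -(1/a) * φ (y, 0) + u / a = (u - φ (y, 0)) / a by ring,
      div_le_iff₀ hapos]
    linarith
  · have := hax
    rw [hdecomp x (f x - ε)] at this
    rw [hvval, show -(1/a) * φ (x, 0) + u / a = (u - φ (x, 0)) / a by ring,
      lt_div_iff₀ hapos]
    linarith

lemma exists_affine_seq {f : E → ℝ} (hconv : ConvexOn ℝ Set.univ f)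
    (hcont : Continuous f) :
    ∃ (v : ℕ → E) (c : ℕ → ℝ), (∀ k y, ⟪v k, y⟫ + c k ≤ f y) ∧
      ∀ x, ∀ ε > 0, ∃ k, f x - ε < ⟪v k, x⟫ + c k := by
  set S : Set (E × ℝ) := {p | ∀ y, ⟪p.1, y⟫ + p.2 ≤ f y} with hS
  have hSne : S.Nonempty := by
    obtain ⟨v, c, hvc, -⟩ := exists_affine_lt hconv hcont 0 one_pos
    exact ⟨(v, c), hvc⟩
  haveI : Nonempty ↥S := hSne.to_subtype
  obtain ⟨D, Dcount, Ddense⟩ := TopologicalSpace.exists_countable_dense ↥S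
  set D' : Set (E × ℝ) := Subtype.val '' D with hD'
  have hD'S : D' ⊆ S := by rintro p ⟨q, -, rfl⟩; exact q.2
  have hD'ne : D'.Nonempty := (Ddense.nonempty).image _
  obtain ⟨g, hg⟩ := (Dcount.image _).exists_eq_range hD'ne
  refine ⟨fun k => (g k).1, fun k => (g k).2, fun k y => ?_, ?_⟩
  · have hmem : g k ∈ D' := by rw [hD', hg]; exact mem_range_self k
    exact hD'S hmem y
  · intro x ε hε
    obtain ⟨v, c, hvc, hx⟩ := exists_affine_lt hconv hcont x (half_pos hε)
    set s : ↥S := ⟨(v, c), hvc⟩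
    have hδ : 0 < ε / (2 * (1 + ‖x‖)) := by positivity
    obtain ⟨d, hd⟩ := Metric.dense_iff.mp Ddense s _ hδ
    obtain ⟨hdball, hdD⟩ := hd
    have hdD' : (d : E × ℝ) ∈ D' := mem_image_of_mem _ hdD
    rw [hD', hg] at hdD'
    obtain ⟨k, hk⟩ := hdD'
    refine ⟨k, ?_⟩
    have hdist : dist (d : E × ℝ) ((v, c) : E × ℝ) < ε / (2 * (1 + ‖x‖)) := by
      have h := Metric.mem_ball.mp hdball
      rw [Subtype.dist_eq] at h
      exact h
    have hmax : dist (d : E × ℝ) ((v, c) : E × ℝ)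
        = max (dist (d : E × ℝ).1 v) (dist (d : E × ℝ).2 c) := Prod.dist_eq
    have h1 : ‖(d : E × ℝ).1 - v‖ < ε / (2 * (1 + ‖x‖)) := by
      rw [← dist_eq_norm]
      exact lt_of_le_of_lt (le_max_left _ _) (hmax ▸ hdist)
    have h2 : |(d : E × ℝ).2 - c| < ε / (2 * (1 + ‖x‖)) := by
      rw [← Real.dist_eq]
      exact lt_of_le_of_lt (le_max_right _ _) (hmax ▸ hdist)
    have hinner : |⟪(d : E × ℝ).1 - v, x⟫| ≤ ‖(d : E × ℝ).1 - v‖ * ‖x‖ :=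
      abs_real_inner_le_norm _ _
    have hx' : ‖x‖ ≤ 1 + ‖x‖ := by linarith [norm_nonneg x]
    have key : |(⟪(d : E × ℝ).1, x⟫ + (d : E × ℝ).2) - (⟪v, x⟫ + c)| < ε / 2 := by
      have expand : (⟪(d : E × ℝ).1, x⟫ + (d : E × ℝ).2) - (⟪v, x⟫ + c)
          = ⟪(d : E × ℝ).1 - v, x⟫ + ((d : E × ℝ).2 - c) := by
        rw [inner_sub_left]; ring
      rw [expand]
      calc |⟪(d : E × ℝ).1 - v, x⟫ + ((d : E × ℝ).2 - c)|
          ≤ |⟪(d : E × ℝ).1 - v, x⟫| + |(d : E × ℝ).2 - c| := abs_add_le _ _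
        _ ≤ ‖(d : E × ℝ).1 - v‖ * ‖x‖ + |(d : E × ℝ).2 - c| := by linarith
        _ < (ε / (2 * (1 + ‖x‖))) * ‖x‖ + ε / (2 * (1 + ‖x‖)) := by
            have h0 : (0:ℝ) ≤ ‖x‖ := norm_nonneg x
            have h3 : ‖(d : E × ℝ).1 - v‖ * ‖x‖ ≤ (ε / (2 * (1 + ‖x‖))) * ‖x‖ :=
              mul_le_mul_of_nonneg_right h1.le h0
            rcases eq_or_lt_of_le h0 with h|h
            · have e1 : ‖(d : E × ℝ).1 - v‖ * ‖x‖ = 0 := by rw [← h]; ring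
              have e2 : (ε / (2 * (1 + ‖x‖))) * ‖x‖ = 0 := by rw [← h]; ring
              rw [e1, e2]
              linarith
            · have h3' : ‖(d : E × ℝ).1 - v‖ * ‖x‖ < (ε / (2 * (1 + ‖x‖))) * ‖x‖ :=
                mul_lt_mul_of_pos_right h1 h
              linarith
        _ = ε / 2 := by
            field_simp
            ring
    have habs := abs_lt.mp key
    show f x - ε < ⟪(g k).1, x⟫ + (g k).2
    rw [hk]
    linarith
end

section
variable {E : Type*} [NormedAddCommGroup E] [InnerProductSpace ℝ E]

/-- partial maximum of a sequence of functions -/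
noncomputable def pmax (L : ℕ → E → ℝ) : ℕ → E → ℝ
  | 0 => L 0
  | (k+1) => fun z => max (pmax L k z) (L (k+1) z)

lemma pmax_mono (L : ℕ → E → ℝ) (z : E) : Monotone (fun k => pmax L k z) := by
  apply monotone_nat_of_le_succ
  intro k
  exact le_max_left _ _

lemma le_pmax (L : ℕ → E → ℝ) {i k : ℕ} (h : i ≤ k) (z : E) : L i z ≤ pmax L k z := by
  induction k with
  | zero => simp at h; simp [h, pmax]
  | succ k ih =>
    rcases Nat.le_succ_iff_eq_or_le.mp h with h' | h'
    · subst h'; exact le_max_right _ _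
    · exact le_trans (ih h') (le_max_left _ _)

lemma pmax_le (L : ℕ → E → ℝ) {M : ℝ} {z : E} (h : ∀ i, L i z ≤ M) (k : ℕ) :
    pmax L k z ≤ M := by
  induction k with
  | zero => exact h 0
  | succ k ih => exact max_le ih (h (k+1))

lemma pmax_exists (L : ℕ → E → ℝ) (k : ℕ) (z : E) : ∃ i ≤ k, pmax L k z = L i z := by
  induction k with
  | zero => exact ⟨0, le_refl _, rfl⟩
  | succ k ih =>
    obtain ⟨i, hik, hi⟩ := ih
    rcases max_cases (pmax L k z) (L (k+1) z) with ⟨h1, -⟩ | ⟨h1, -⟩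
    · exact ⟨i, hik.trans (Nat.le_succ _), by rw [show pmax L (k+1) z = max (pmax L k z) (L (k+1) z) from rfl, h1, hi]⟩
    · exact ⟨k+1, le_refl _, h1⟩

lemma pmax_continuous {L : ℕ → E → ℝ} (hL : ∀ i, Continuous (L i)) (k : ℕ) :
    Continuous (pmax L k) := by
  induction k with
  | zero => exact hL 0
  | succ k ih => exact Continuous.max ih (hL (k+1))

lemma pmax_tendsto {L : ℕ → E → ℝ} {f : E → ℝ}
    (hle : ∀ i z, L i z ≤ f z)
    (happrox : ∀ z, ∀ ε > 0, ∃ i, f z - ε < L i z) (z : E) :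
    Tendsto (fun k => pmax L k z) atTop (nhds (f z)) := by
  rw [Metric.tendsto_atTop]
  intro ε hε
  obtain ⟨i, hi⟩ := happrox z ε hε
  refine ⟨i, fun k hk => ?_⟩
  have h1 : pmax L k z ≤ f z := pmax_le L (fun j => hle j z) k
  have h2 : f z - ε < pmax L k z := lt_of_lt_of_le hi (le_pmax L hk z)
  rw [Real.dist_eq, abs_lt]
  constructor <;> linarith
end

lemma weak_bounded {α : Type*} [MeasurableSpace α] {μ : Measure α} [IsFiniteMeasure μ]
    {E : Type*} [NormedAddCommGroup E] [InnerProductSpace ℝ E] [CompleteSpace E] {p q : ℝ}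
    (hpq : p.HolderConjugate q) (u : ℕ → α → E)
    (hu : ∀ n, MemLp (u n) (ENNReal.ofReal p) μ)
    (hconv : ∀ g : α → E, MemLp g (ENNReal.ofReal q) μ →
      ∃ l : ℝ, Tendsto (fun n => ∫ x, ⟪u n x, g x⟫ ∂μ) atTop (nhds l)) :
    ∃ C : ℝ, ∀ n, (∫ x, ‖u n x‖ ^ p ∂μ) ≤ C := by
  classical
  have hq1 : 1 < q := hpq.symm.lt
  have hp1 : 1 < p := hpq.lt
  have hp0 : 0 < p := hpq.pos
  have hq0 : 0 < q := hpq.symm.pos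
  set qe : ℝ≥0∞ := ENNReal.ofReal q with hqe
  have hqe0 : qe ≠ 0 := by simp [hqe, ENNReal.ofReal_eq_zero]; linarith
  have hqetop : qe ≠ ∞ := ENNReal.ofReal_ne_top
  haveI : Fact (1 ≤ qe) := ⟨by rw [hqe]; exact ENNReal.one_le_ofReal.mpr hq1.le⟩
  set pe : ℝ≥0∞ := ENNReal.ofReal p with hpe
  have hpe0 : pe ≠ 0 := by simp [hpe, ENNReal.ofReal_eq_zero]; linarith
  have hpetop : pe ≠ ∞ := ENNReal.ofReal_ne_top
  -- product integrability
  have hprodInt : ∀ (w : α → E), MemLp w pe μ → ∀ (g : α → E), MemLp g qe μ →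
      Integrable (fun x => ‖g x‖ * ‖w x‖) μ := by
    intro w hw g hg
    have hsum : (1 : ℝ≥0∞) / 1 = 1 / qe + 1 / pe := by
      rw [hqe, hpe, ← ENNReal.ofReal_one,
        ← ENNReal.ofReal_div_of_pos hq0, ← ENNReal.ofReal_div_of_pos hp0,
        ← ENNReal.ofReal_div_of_pos one_pos,
        ← ENNReal.ofReal_add (by positivity) (by positivity)]
      congr 1
      rw [div_one, one_div, one_div, ← hpq.inv_add_inv_eq_one]
      ring
    haveI : ENNReal.HolderTriple qe pe 1 := ⟨by simpa [one_div] using hsum.symm⟩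
    have := (hw.norm).smul (hg.norm) (r := 1)
    rw [memLp_one_iff_integrable] at this
    exact this
  -- Hölder: integrability of the pairing
  have hpairing : ∀ (w : α → E), MemLp w pe μ → ∀ (g : α → E), MemLp g qe μ →
      Integrable (fun x => ⟪w x, g x⟫) μ := by
    intro w hw g hg
    refine ((hprodInt w hw g hg).mono' ((hw.1.inner hg.1)) ?_)
    filter_upwards with x
    rw [Real.norm_eq_abs]
    calc |⟪w x, g x⟫| ≤ ‖w x‖ * ‖g x‖ := abs_real_inner_le_norm _ _
      _ = ‖g x‖ * ‖w x‖ := mul_comm _ _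
  -- the Lp-norm formula
  have hnormg : ∀ g : α → E, MemLp g qe μ →
      (eLpNorm g qe μ).toReal = (∫ x, ‖g x‖ ^ q ∂μ) ^ (1 / q) := by
    intro g hg
    rw [hg.eLpNorm_eq_integral_rpow_norm hqe0 hqetop, ENNReal.toReal_ofReal (by positivity)]
    rw [hqe, ENNReal.toReal_ofReal hq0.le, one_div]
  -- bound for the pairing
  have hbound : ∀ (w : α → E), MemLp w pe μ → ∀ (g : α → E), MemLp g qe μ →
      |∫ x, ⟪w x, g x⟫ ∂μ| ≤ (∫ x, ‖w x‖ ^ p ∂μ) ^ (1/p) * (∫ x, ‖g x‖ ^ q ∂μ) ^ (1/q) := by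
    intro w hw g hg
    calc |∫ x, ⟪w x, g x⟫ ∂μ| ≤ ∫ x, |⟪w x, g x⟫| ∂μ := by
          simpa [Real.norm_eq_abs] using norm_integral_le_integral_norm (fun x => ⟪w x, g x⟫)
      _ ≤ ∫ x, ‖w x‖ * ‖g x‖ ∂μ := by
          apply integral_mono_ae (hpairing w hw g hg).abs
            ((hprodInt w hw g hg).congr (ae_of_all _ fun x => mul_comm _ _))
          exact ae_of_all _ fun x => abs_real_inner_le_norm _ _
      _ ≤ _ := integral_mul_norm_le_Lp_mul_Lq hpq hw hg
  -- the continuous linear functionals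
  let Φraw : ℕ → (Lp E qe μ) →ₗ[ℝ] ℝ := fun n =>
    { toFun := fun g => ∫ x, ⟪u n x, (g : α → E) x⟫ ∂μ
      map_add' := by
        intro g h
        rw [← integral_add (hpairing _ (hu n) _ (Lp.memLp g)) (hpairing _ (hu n) _ (Lp.memLp h))]
        apply integral_congr_ae
        filter_upwards [Lp.coeFn_add g h] with x hx
        rw [hx]
        simp [inner_add_right]
      map_smul' := by
        intro r g
        rw [RingHom.id_apply, ← integral_smul]
        apply integral_congr_ae
        filter_upwards [Lp.coeFn_smul r g] with x hx
        rw [hx]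
        simp [inner_smul_right] }
  have hΦb : ∀ n (g : Lp E qe μ), ‖Φraw n g‖ ≤ ((∫ x, ‖u n x‖ ^ p ∂μ) ^ (1/p)) * ‖g‖ := by
    intro n g
    rw [Real.norm_eq_abs]
    calc |Φraw n g| ≤ (∫ x, ‖u n x‖ ^ p ∂μ) ^ (1/p) * (∫ x, ‖(g : α → E) x‖ ^ q ∂μ) ^ (1/q) :=
          hbound _ (hu n) _ (Lp.memLp g)
      _ = _ := by rw [Lp.norm_def, hnormg _ (Lp.memLp g)]
  let Φ : ℕ → (Lp E qe μ) →L[ℝ] ℝ := fun n => (Φraw n).mkContinuous _ (hΦb n)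
  have hΦapp : ∀ n (g : Lp E qe μ), Φ n g = ∫ x, ⟪u n x, (g : α → E) x⟫ ∂μ := fun n g => rfl
  -- pointwise boundedness
  have hpt : ∀ g : Lp E qe μ, ∃ C, ∀ n, ‖Φ n g‖ ≤ C := by
    intro g
    obtain ⟨l, hl⟩ := hconv _ (Lp.memLp g)
    have hl' : Tendsto (fun n => ‖Φ n g‖) atTop (nhds ‖l‖) := by
      simpa [hΦapp] using hl.norm
    obtain ⟨C, hC⟩ := hl'.bddAbove_range
    exact ⟨C, fun n => hC (mem_range_self n)⟩
  obtain ⟨C, hC⟩ := banach_steinhaus hpt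
  -- lower bound for the norms
  refine ⟨max 1 ((max C 0) ^ p), fun n => ?_⟩
  set t : ℝ := ∫ x, ‖u n x‖ ^ p ∂μ with ht
  have ht0 : 0 ≤ t := integral_nonneg fun x => Real.rpow_nonneg (norm_nonneg _) _
  -- the dual test function
  set gf : α → E := fun x => (‖u n x‖ ^ (p - 2)) • u n x with hgf
  have hgnorm : ∀ x, ‖gf x‖ = ‖u n x‖ ^ (p - 1) := by
    intro x
    rcases eq_or_ne (u n x) 0 with h | h
    · simp [hgf, h, Real.zero_rpow (by linarith : p - 1 ≠ 0)]
    · have hpos : 0 < ‖u n x‖ := norm_pos_iff.mpr h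
      rw [hgf]
      show ‖(‖u n x‖ ^ (p - 2)) • u n x‖ = _
      rw [norm_smul, Real.norm_eq_abs, abs_of_nonneg (Real.rpow_nonneg (norm_nonneg _) _),
        show p - 1 = (p - 2) + 1 by ring, Real.rpow_add_one hpos.ne']
  have hgsm : AEStronglyMeasurable gf μ :=
    ((hu n).1.norm.aemeasurable.pow_const (p - 2)).aestronglyMeasurable.smul (hu n).1
  have hpow : MemLp (fun x => ‖u n x‖ ^ (p - 1)) qe μ := by
    have h := (hu n).norm_rpow_div (ENNReal.ofReal (p - 1))
    have e1 : (ENNReal.ofReal (p - 1)).toReal = p - 1 := ENNReal.toReal_ofReal (by linarith)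
    have e2 : pe / ENNReal.ofReal (p - 1) = qe := by
      rw [hpe, hqe, ← ENNReal.ofReal_div_of_pos (by linarith : (0:ℝ) < p - 1), hpq.conjugate_eq]
    rw [e1, e2] at h
    exact h
  have hgmem : MemLp gf qe μ := by
    refine ⟨hgsm, ?_⟩
    have heq : eLpNorm gf qe μ = eLpNorm (fun x => ‖u n x‖ ^ (p - 1)) qe μ := by
      apply eLpNorm_congr_norm_ae
      filter_upwards with x
      rw [hgnorm x, Real.norm_eq_abs, abs_of_nonneg (Real.rpow_nonneg (norm_nonneg _) _)]
    rw [heq]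
    exact hpow.2
  have hpair_val : (∫ x, ⟪u n x, gf x⟫ ∂μ) = t := by
    rw [ht]
    apply integral_congr_ae (ae_of_all _ fun x => ?_)
    rw [hgf]
    show ⟪u n x, (‖u n x‖ ^ (p - 2)) • u n x⟫ = ‖u n x‖ ^ p
    rw [real_inner_smul_right, real_inner_self_eq_norm_mul_norm]
    rcases eq_or_ne (u n x) 0 with h | h
    · simp [h, Real.zero_rpow hp0.ne']
    · have hpos : 0 < ‖u n x‖ := norm_pos_iff.mpr h
      rw [← mul_assoc, ← Real.rpow_add_one hpos.ne', ← Real.rpow_add_one hpos.ne']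
      congr 1
      ring
  have hnorm_toLp : ‖hgmem.toLp gf‖ = t ^ (1/q) := by
    rw [Lp.norm_toLp, hnormg _ hgmem]
    congr 1
    rw [ht]
    apply integral_congr_ae (ae_of_all _ fun x => ?_)
    rw [hgnorm x, ← Real.rpow_mul (norm_nonneg _), hpq.sub_one_mul_conj]
  have hΦval : Φ n (hgmem.toLp gf) = t := by
    rw [hΦapp, ← hpair_val]
    apply integral_congr_ae
    filter_upwards [hgmem.coeFn_toLp] with x hx
    rw [hx]
  have hkey : t ≤ C * t ^ (1/q) := by
    have h1 : ‖Φ n (hgmem.toLp gf)‖ ≤ ‖Φ n‖ * ‖hgmem.toLp gf‖ := (Φ n).le_opNorm _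
    rw [hΦval, hnorm_toLp, Real.norm_eq_abs, abs_of_nonneg ht0] at h1
    exact h1.trans (mul_le_mul_of_nonneg_right (hC n) (Real.rpow_nonneg ht0 _))
  rcases le_or_gt t 1 with h | h
  · exact h.trans (le_max_left _ _)
  · refine le_trans ?_ (le_max_right _ _)
    have htpos : 0 < t := lt_trans one_pos h
    have hsplit : t = t ^ (1/p) * t ^ (1/q) := by
      rw [← Real.rpow_add htpos, one_div, one_div, hpq.inv_add_inv_eq_one, Real.rpow_one]
    have h2 : t ^ (1/p) ≤ C := by
      have h3 : t ^ (1/p) * t ^ (1/q) ≤ C * t ^ (1/q) := by rw [← hsplit]; exact hkey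
      exact le_of_mul_le_mul_right h3 (Real.rpow_pos_of_pos htpos _)
    calc t = (t ^ (1/p)) ^ p := by
          rw [← Real.rpow_mul htpos.le, one_div, inv_mul_cancel₀ hp0.ne', Real.rpow_one]
      _ ≤ (max C 0) ^ p := Real.rpow_le_rpow (Real.rpow_nonneg ht0 _)
          (h2.trans (le_max_left _ _)) hp0.le

theorem stmt18 (d : ℕ) (E : Type*) [NormedAddCommGroup E] [InnerProductSpace ℝ E]
    [FiniteDimensional ℝ E] [MeasurableSpace E] [BorelSpace E]
    (Ω : Set (EuclideanSpace ℝ (Fin d))) (hΩ : IsOpen Ω) (hbdd : Bornology.IsBounded Ω)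
    (f : E → ℝ) (hconv : ConvexOn ℝ Set.univ f) (hnonneg : ∀ ζ, 0 ≤ f ζ)
    (p q cgrow : ℝ) (hp : 1 < p) (hpq : 1 / p + 1 / q = 1) (hcgrow : 0 < cgrow)
    (hgrowth : ∀ ζ, f ζ ≤ cgrow * (‖ζ‖ ^ p + 1))
    (A : Set (EuclideanSpace ℝ (Fin d))) (An : ℕ → Set (EuclideanSpace ℝ (Fin d)))
    (hA : MeasurableSet A) (hAn : ∀ n, MeasurableSet (An n))
    (hAΩ : A ⊆ Ω) (hAnΩ : ∀ n, An n ⊆ Ω)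
    -- `χ_{A_n} → χ_A` in `L¹(Ω)`:
    (hχ : Tendsto (fun n => ∫ x in Ω,
        |Set.indicator (An n) (fun _ => (1:ℝ)) x - Set.indicator A (fun _ => (1:ℝ)) x|)
      atTop (nhds 0))
    (e : EuclideanSpace ℝ (Fin d) → E) (en : ℕ → EuclideanSpace ℝ (Fin d) → E)
    (he : MemLp (Set.indicator A e) (ENNReal.ofReal p) (volume.restrict Ω))
    (hen : ∀ n, MemLp (Set.indicator (An n) (en n)) (ENNReal.ofReal p) (volume.restrict Ω))
    -- `e_n χ_{A_n} ⇀ e χ_A` weakly in `L^p(Ω)`: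
    (hweak : ∀ g : EuclideanSpace ℝ (Fin d) → E,
      MemLp g (ENNReal.ofReal q) (volume.restrict Ω) →
      Tendsto (fun n => ∫ x in Ω, ⟪Set.indicator (An n) (en n) x, g x⟫) atTop
        (nhds (∫ x in Ω, ⟪Set.indicator A e x, g x⟫))) :
    (∫ x in A, f (e x)) ≤ Filter.atTop.liminf (fun n => ∫ x in An n, f (en n x)) := by
  classical
  have hΩm : MeasurableSet Ω := hΩ.measurableSet
  set μ := volume.restrict Ω with hμdef
  have hΩfin : volume Ω < ⊤ := hbdd.measure_lt_top
  haveI : IsFiniteMeasure μ := ⟨by rwa [hμdef, Measure.restrict_apply_univ]⟩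
  have hcont : Continuous f :=
    continuousOn_univ.mp (hconv.continuousOn isOpen_univ)
  have hq1 : 1 < q := by
    have h1 : (0:ℝ) < 1/p := by positivity
    have h1' : 1/p < 1 := by rw [div_lt_one (by positivity)]; exact hp
    have h2 : 0 < 1/q := by linarith
    have hq0 : 0 < q := by
      rcases lt_trichotomy q 0 with h|h|h
      · exfalso
        have : 1/q < 0 := div_neg_of_pos_of_neg one_pos h
        linarith
      · exfalso; rw [h] at h2; simp at h2
      · exact h
    exact (div_lt_one hq0).mp (by linarith)
  have hconj : p.HolderConjugate q := Real.holderConjugate_iff.mpr ⟨hp, by rw [← one_div, ← one_div]; exact hpq⟩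
  obtain ⟨v, c, hle, happrox⟩ := exists_affine_seq hconv hcont
  set L : ℕ → E → ℝ := fun i z => ⟪v i, z⟫ + c i with hLdef
  have hLcont : ∀ i, Continuous (L i) :=
    fun i => (continuous_const.inner continuous_id).add continuous_const
  -- restriction facts
  have hres : ∀ t : Set (EuclideanSpace ℝ (Fin d)), MeasurableSet t → t ⊆ Ω →
      μ.restrict t = volume.restrict t := by
    intro t ht htΩ
    rw [hμdef, Measure.restrict_restrict ht, inter_eq_self_of_subset_left htΩ]
  have hIndInt : ∀ (t : Set (EuclideanSpace ℝ (Fin d))), MeasurableSet t → t ⊆ Ω →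
      ∀ (F : EuclideanSpace ℝ (Fin d) → ℝ), (∫ x in Ω, t.indicator F x) = ∫ x in t, F x := by
    intro t ht htΩ F
    rw [show (∫ x in Ω, t.indicator F x) = ∫ x, t.indicator F x ∂μ from rfl,
      integral_indicator ht, hres t ht htΩ]
  -- integrability of f ∘ (indicator w)
  have hgrowthInt : ∀ (w : EuclideanSpace ℝ (Fin d) → E),
      MemLp w (ENNReal.ofReal p) μ →
      Integrable (fun x => cgrow * (‖w x‖ ^ p + 1)) μ ∧ Integrable (fun x => f (w x)) μ := by
    intro w hw
    have h1 : Integrable (fun x => ‖w x‖ ^ p) μ := by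
      have h := hw.integrable_norm_rpow (by simp [ENNReal.ofReal_eq_zero]; linarith)
        (by simp)
      rwa [ENNReal.toReal_ofReal (by linarith : (0:ℝ) ≤ p)] at h
    have h2 : Integrable (fun x => cgrow * (‖w x‖ ^ p + 1)) μ :=
      (h1.add (integrable_const 1)).const_mul cgrow
    refine ⟨h2, h2.mono' (hcont.comp_aestronglyMeasurable hw.1) ?_⟩
    filter_upwards with x
    rw [Real.norm_eq_abs, abs_of_nonneg (hnonneg _)]
    exact hgrowth _
  have hfeInt : Integrable (fun x => f (A.indicator e x)) μ := (hgrowthInt _ he).2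
  have hfenInt : ∀ n, Integrable (fun x => f ((An n).indicator (en n) x)) μ :=
    fun n => (hgrowthInt _ (hen n)).2
  have heInt : Integrable (A.indicator e) μ :=
    he.integrable (ENNReal.one_le_ofReal.mpr (by linarith))
  have henInt : ∀ n, Integrable ((An n).indicator (en n)) μ :=
    fun n => (hen n).integrable (ENNReal.one_le_ofReal.mpr (by linarith))
  -- transfer integrability to sets
  have hEOn : IntegrableOn e A volume := by
    have h2 : IntegrableOn (A.indicator e) A volume := by
      rw [IntegrableOn, ← hres _ hA hAΩ]; exact heInt.integrableOn
    exact h2.congr_fun (fun x hx => indicator_of_mem hx _) hA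
  have hEnOn : ∀ n, IntegrableOn (en n) (An n) volume := by
    intro n
    have h2 : IntegrableOn ((An n).indicator (en n)) (An n) volume := by
      rw [IntegrableOn, ← hres _ (hAn n) (hAnΩ n)]; exact (henInt n).integrableOn
    exact h2.congr_fun (fun x hx => indicator_of_mem hx _) (hAn n)
  have hFeOn : IntegrableOn (fun x => f (e x)) A volume := by
    have h2 : IntegrableOn (fun x => f (A.indicator e x)) A volume := by
      rw [IntegrableOn, ← hres _ hA hAΩ]; exact hfeInt.integrableOn
    exact h2.congr_fun (fun x hx => by dsimp only; rw [indicator_of_mem hx]) hA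
  have hFenOn : ∀ n, IntegrableOn (fun x => f (en n x)) (An n) volume := by
    intro n
    have h2 : IntegrableOn (fun x => f ((An n).indicator (en n) x)) (An n) volume := by
      rw [IntegrableOn, ← hres _ (hAn n) (hAnΩ n)]; exact (hfenInt n).integrableOn
    exact h2.congr_fun (fun x hx => by dsimp only; rw [indicator_of_mem hx]) (hAn n)
  -- measurable representative of e on A
  obtain ⟨e', he'sm, hee'⟩ : ∃ e', StronglyMeasurable e' ∧ A.indicator e =ᵐ[μ] e' :=
    ⟨he.1.mk _, he.1.stronglyMeasurable_mk, he.1.ae_eq_mk⟩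
  have he'meas : Measurable e' := he'sm.measurable
  have hee'A : (fun x => e x) =ᵐ[volume.restrict A] e' := by
    have h1 : A.indicator e =ᵐ[volume.restrict A] e' := by
      rw [← hres A hA hAΩ]
      exact ae_restrict_of_ae hee'
    filter_upwards [h1, ae_restrict_mem hA] with x hx hxA
    rwa [indicator_of_mem hxA] at hx
  -- weak convergence on subsets
  have hWK : ∀ (s : Set (EuclideanSpace ℝ (Fin d))), MeasurableSet s → s ⊆ Ω → ∀ w : E,
      Tendsto (fun n => ∫ x in An n ∩ s, ⟪en n x, w⟫) atTop
        (nhds (∫ x in A ∩ s, ⟪e x, w⟫)) := by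
    intro s hs hsΩ w
    have hg : MemLp (s.indicator (fun _ => w)) (ENNReal.ofReal q) μ := by
      have htop : MemLp (s.indicator (fun _ => w)) ⊤ μ := by
        refine memLp_top_of_bound (aestronglyMeasurable_const.indicator hs) ‖w‖ ?_
        filter_upwards with x
        exact norm_indicator_le_norm_self (fun _ => w) x
      exact htop.mono_exponent le_top
    have h := hweak _ hg
    have heq : ∀ (t : Set (EuclideanSpace ℝ (Fin d))), MeasurableSet t → t ⊆ Ω →
        ∀ (u : EuclideanSpace ℝ (Fin d) → E),
        (∫ x in Ω, ⟪t.indicator u x, s.indicator (fun _ => w) x⟫)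
          = ∫ x in t ∩ s, ⟪u x, w⟫ := by
      intro t ht htΩ u
      have hpt : ∀ x, ⟪t.indicator u x, s.indicator (fun _ => w) x⟫
          = (t ∩ s).indicator (fun x => ⟪u x, w⟫) x := by
        intro x
        by_cases hx1 : x ∈ t <;> by_cases hx2 : x ∈ s <;>
          simp [hx1, hx2, indicator_of_mem, indicator_of_notMem, mem_inter_iff]
      simp_rw [hpt]
      exact hIndInt _ (ht.inter hs) (fun x hx => htΩ hx.1) _
    have h1 : (fun n => ∫ x in Ω, ⟪(An n).indicator (en n) x, s.indicator (fun _ => w) x⟫)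
        = fun n => ∫ x in An n ∩ s, ⟪en n x, w⟫ := by
      funext n; exact heq _ (hAn n) (hAnΩ n) _
    rw [h1, heq _ hA hAΩ _] at h
    exact h
  -- volume convergence on subsets
  have hVol : ∀ (s : Set (EuclideanSpace ℝ (Fin d))), MeasurableSet s → s ⊆ Ω →
      Tendsto (fun n => (volume (An n ∩ s)).toReal) atTop (nhds (volume (A ∩ s)).toReal) := by
    intro s hs hsΩ
    have key : ∀ (t : Set (EuclideanSpace ℝ (Fin d))), MeasurableSet t → t ⊆ Ω →
        (volume (t ∩ s)).toReal = ∫ x in Ω, (t ∩ s).indicator (fun _ => (1:ℝ)) x := by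
      intro t ht htΩ
      rw [hIndInt _ (ht.inter hs) (fun x hx => htΩ hx.1) _, setIntegral_const, smul_eq_mul,
        mul_one, measureReal_def]
    have hIndI : ∀ (t : Set (EuclideanSpace ℝ (Fin d))), MeasurableSet t →
        Integrable (t.indicator (fun _ => (1:ℝ))) μ :=
      fun t ht => (integrable_const (1:ℝ)).indicator ht
    have hb : ∀ n, |(volume (An n ∩ s)).toReal - (volume (A ∩ s)).toReal| ≤
        ∫ x in Ω, |(An n).indicator (fun _ => (1:ℝ)) x - A.indicator (fun _ => (1:ℝ)) x| := by
      intro n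
      rw [key _ (hAn n) (hAnΩ n), key _ hA hAΩ,
        ← integral_sub (hIndI _ ((hAn n).inter hs)) (hIndI _ (hA.inter hs))]
      calc |∫ x, ((An n ∩ s).indicator (fun _ => (1:ℝ)) x
              - (A ∩ s).indicator (fun _ => (1:ℝ)) x) ∂μ|
          ≤ ∫ x, |(An n ∩ s).indicator (fun _ => (1:ℝ)) x
              - (A ∩ s).indicator (fun _ => (1:ℝ)) x| ∂μ := by
            simpa [Real.norm_eq_abs] using norm_integral_le_integral_norm
              (fun x => (An n ∩ s).indicator (fun _ => (1:ℝ)) x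
                - (A ∩ s).indicator (fun _ => (1:ℝ)) x)
        _ ≤ _ := by
            apply integral_mono_ae
              (((hIndI _ ((hAn n).inter hs)).sub (hIndI _ (hA.inter hs))).abs)
              (((hIndI _ (hAn n)).sub (hIndI _ hA)).abs)
            filter_upwards with x
            by_cases hx1 : x ∈ An n <;> by_cases hx2 : x ∈ A <;> by_cases hx3 : x ∈ s <;>
              simp [hx1, hx2, hx3, indicator_of_mem, indicator_of_notMem, mem_inter_iff,
                abs_nonneg]
    have h0 : Tendsto (fun n => |(volume (An n ∩ s)).toReal - (volume (A ∩ s)).toReal|)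
        atTop (nhds 0) := squeeze_zero (fun n => abs_nonneg _) hb hχ
    rw [tendsto_iff_dist_tendsto_zero]
    simpa [Real.dist_eq] using h0
  -- boundedness of the right-hand side via Banach–Steinhaus
  have hcob : IsCoboundedUnder (· ≥ ·) atTop (fun n => ∫ x in An n, f (en n x)) := by
    obtain ⟨C, hC⟩ := weak_bounded hconj (fun n => (An n).indicator (en n)) hen
      (fun g hg => ⟨_, hweak g hg⟩)
    apply isCoboundedUnder_ge_of_eventually_le atTop (x := cgrow * (C + (volume Ω).toReal))
    filter_upwards with n
    have h1 : (∫ x in An n, f (en n x)) = ∫ x in An n, f ((An n).indicator (en n) x) ∂μ := by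
      rw [← hres _ (hAn n) (hAnΩ n)]
      apply setIntegral_congr_fun (hAn n)
      intro x hx
      exact (congrArg f (indicator_of_mem hx _)).symm
    rw [h1]
    have h2 : (∫ x in An n, f ((An n).indicator (en n) x) ∂μ)
        ≤ ∫ x, f ((An n).indicator (en n) x) ∂μ :=
      setIntegral_le_integral (hfenInt n) (ae_of_all _ fun x => hnonneg _)
    have h3 : (∫ x, f ((An n).indicator (en n) x) ∂μ)
        ≤ ∫ x, cgrow * (‖(An n).indicator (en n) x‖ ^ p + 1) ∂μ := by
      apply integral_mono_ae (hfenInt n) (hgrowthInt _ (hen n)).1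
      exact ae_of_all _ fun x => hgrowth _
    have h4 : (∫ x, cgrow * (‖(An n).indicator (en n) x‖ ^ p + 1) ∂μ)
        = cgrow * ((∫ x, ‖(An n).indicator (en n) x‖ ^ p ∂μ) + (volume Ω).toReal) := by
      rw [integral_const_mul]
      congr 1
      have h5 : Integrable (fun x => ‖(An n).indicator (en n) x‖ ^ p) μ := by
        have h := (hen n).integrable_norm_rpow (by simp [ENNReal.ofReal_eq_zero]; linarith)
          (by simp)
        rwa [ENNReal.toReal_ofReal (by linarith : (0:ℝ) ≤ p)] at h
      rw [integral_add h5 (integrable_const 1), integral_const, smul_eq_mul, mul_one]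
      congr 1
      rw [hμdef, measureReal_def, Measure.restrict_apply_univ]
    rw [h4] at h3
    have h6 : cgrow * ((∫ x, ‖(An n).indicator (en n) x‖ ^ p ∂μ) + (volume Ω).toReal)
        ≤ cgrow * (C + (volume Ω).toReal) := by
      apply mul_le_mul_of_nonneg_left _ hcgrow.le
      have := hC n
      linarith
    linarith
  -- integrability of the dominating function
  have hL0On : IntegrableOn (fun x => ⟪v 0, e x⟫ + c 0) A volume :=
    (hEOn.const_inner _).add (integrableOn_const
      ((lt_of_le_of_lt (measure_mono hAΩ) hΩfin).ne))
  have hGbound : IntegrableOn (fun x => f (e x) + |⟪v 0, e x⟫ + c 0|) A volume :=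
    hFeOn.add hL0On.abs
  have hpmax_bound : ∀ k x, |pmax L k (e x)| ≤ f (e x) + |⟪v 0, e x⟫ + c 0| := by
    intro k x
    have h1 : pmax L k (e x) ≤ f (e x) := pmax_le L (fun i => hle i (e x)) k
    have h2 : L 0 (e x) ≤ pmax L k (e x) := le_pmax L (Nat.zero_le k) (e x)
    have h3 := hnonneg (e x)
    have h4 : L 0 (e x) = ⟪v 0, e x⟫ + c 0 := rfl
    have h5 := neg_abs_le (⟪v 0, e x⟫ + c 0)
    have h6 := abs_nonneg (⟪v 0, e x⟫ + c 0)
    rw [abs_le]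
    constructor <;> [linarith; linarith]
  have hPmaxASM : ∀ k, AEStronglyMeasurable (fun x => pmax L k (e x)) (volume.restrict A) := by
    intro k
    have hm : AEStronglyMeasurable (fun x => pmax L k (e' x)) (volume.restrict A) :=
      ((pmax_continuous hLcont k).comp_stronglyMeasurable he'sm).aestronglyMeasurable
    exact hm.congr ((hee'A.fun_comp (pmax L k)).symm)
  have hPmaxOnA : ∀ k, IntegrableOn (fun x => pmax L k (e x)) A volume := by
    intro k
    apply Integrable.mono' hGbound (hPmaxASM k)
    exact ae_of_all _ fun x => by rw [Real.norm_eq_abs]; exact hpmax_bound k x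
  -- the key estimate for each k
  have key : ∀ k, (∫ x in A, pmax L k (e x)) ≤
      atTop.liminf (fun n => ∫ x in An n, f (en n x)) := by
    intro k
    set B : ℕ → Set (EuclideanSpace ℝ (Fin d)) := fun i =>
      A ∩ {x | pmax L k (e' x) = L i (e' x) ∧ ∀ j, j < i → pmax L k (e' x) ≠ L j (e' x)}
      with hBdef
    have hpm : Measurable fun x => pmax L k (e' x) :=
      (pmax_continuous hLcont k).measurable.comp he'meas
    have hLm : ∀ i, Measurable fun x => L i (e' x) :=
      fun i => (hLcont i).measurable.comp he'meas
    have hBmeas : ∀ i, MeasurableSet (B i) := by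
      intro i
      apply hA.inter
      rw [setOf_and]
      have h1 : MeasurableSet {x | pmax L k (e' x) = L i (e' x)} :=
        measurableSet_eq_fun hpm (hLm i)
      have h2 : MeasurableSet {x | ∀ j, j < i → pmax L k (e' x) ≠ L j (e' x)} := by
        have heq2 : {x | ∀ j, j < i → pmax L k (e' x) ≠ L j (e' x)}
            = ⋂ j ∈ {j : ℕ | j < i}, {x | pmax L k (e' x) = L j (e' x)}ᶜ := by
          ext x; simp
        rw [heq2]
        exact MeasurableSet.biInter (to_countable _)
          (fun j _ => (measurableSet_eq_fun hpm (hLm j)).compl)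
      exact h1.inter h2
    have hdisj : ∀ i j, i ≠ j → Disjoint (B i) (B j) := by
      have base : ∀ i j, i < j → Disjoint (B i) (B j) := by
        intro i j hij
        rw [Set.disjoint_left]
        rintro x ⟨-, hx1, -⟩ ⟨-, -, hx2⟩
        exact hx2 i hij hx1
      intro i j hij
      rcases lt_or_gt_of_ne hij with h | h
      · exact base i j h
      · exact (base j i h).symm
    have hBdisj : (↑(Finset.range (k+1)) : Set ℕ).Pairwise (Function.onFun Disjoint B) :=
      fun i _ j _ hij => hdisj i j hij
    have hBunion : (⋃ i ∈ Finset.range (k+1), B i) = A := by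
      apply Subset.antisymm
      · exact iUnion₂_subset fun i _ => inter_subset_left
      · intro x hx
        have hex : ∃ i, pmax L k (e' x) = L i (e' x) := by
          obtain ⟨i, hik, hi⟩ := pmax_exists L k (e' x)
          exact ⟨i, hi⟩
        have hi₀k : Nat.find hex ≤ k := by
          obtain ⟨i, hik, hi⟩ := pmax_exists L k (e' x)
          exact (Nat.find_min' hex hi).trans hik
        apply mem_biUnion (Finset.mem_range.mpr (Nat.lt_succ_of_le hi₀k))
        exact ⟨hx, Nat.find_spec hex, fun j hj => Nat.find_min hex hj⟩
    have hBsubA : ∀ i, B i ⊆ A := fun i => inter_subset_left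
    have hBiΩ : ∀ i, B i ⊆ Ω := fun i => (hBsubA i).trans hAΩ
    have hvolfin : ∀ (t : Set (EuclideanSpace ℝ (Fin d))), t ⊆ Ω → volume t < ⊤ :=
      fun t ht => lt_of_le_of_lt (measure_mono ht) hΩfin
    -- convergence of each term
    have hterm : ∀ i ∈ Finset.range (k+1),
        Tendsto (fun n => ∫ x in An n ∩ B i, (⟪v i, en n x⟫ + c i)) atTop
          (nhds (∫ x in B i, (⟪v i, e x⟫ + c i))) := by
      intro i _
      have h1 := hWK (B i) (hBmeas i) (hBiΩ i) (v i)
      have h2 := hVol (B i) (hBmeas i) (hBiΩ i)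
      have hsplit : ∀ (t : Set (EuclideanSpace ℝ (Fin d))), MeasurableSet t → t ⊆ Ω →
          ∀ (u : EuclideanSpace ℝ (Fin d) → E), IntegrableOn u t volume →
          ∫ x in t, (⟪v i, u x⟫ + c i) = (∫ x in t, ⟪u x, v i⟫) + (volume t).toReal * c i := by
        intro t ht htΩ u hu
        rw [integral_add (hu.const_inner _) (integrableOn_const (C := c i) (hvolfin t htΩ).ne),
          setIntegral_const, smul_eq_mul]
        congr 1
        exact integral_congr_ae (ae_of_all _ fun x => real_inner_comm _ _)
      have e1 : ∀ n, (∫ x in An n ∩ B i, (⟪v i, en n x⟫ + c i))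
          = (∫ x in An n ∩ B i, ⟪en n x, v i⟫) + (volume (An n ∩ B i)).toReal * c i :=
        fun n => hsplit _ ((hAn n).inter (hBmeas i)) (fun x hx => hAnΩ n hx.1) _
          ((hEnOn n).mono_set inter_subset_left)
      have e2 : (∫ x in B i, (⟪v i, e x⟫ + c i))
          = (∫ x in A ∩ B i, ⟪e x, v i⟫) + (volume (A ∩ B i)).toReal * c i := by
        rw [show A ∩ B i = B i from inter_eq_self_of_subset_right (hBsubA i)]
        exact hsplit _ (hBmeas i) (hBiΩ i) _ (hEOn.mono_set (hBsubA i))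
      simp_rw [e1]
      rw [e2]
      exact h1.add (h2.mul_const _)
    have hSn_tendsto : Tendsto (fun n => ∑ i ∈ Finset.range (k+1),
        ∫ x in An n ∩ B i, (⟪v i, en n x⟫ + c i)) atTop
        (nhds (∑ i ∈ Finset.range (k+1), ∫ x in B i, (⟪v i, e x⟫ + c i))) :=
      tendsto_finset_sum _ hterm
    -- the limit equals the integral of pmax
    have hTeq : (∫ x in A, pmax L k (e x)) = ∑ i ∈ Finset.range (k+1),
        ∫ x in B i, (⟪v i, e x⟫ + c i) := by
      have h1 : (∫ x in A, pmax L k (e x))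
          = ∫ x in ⋃ i ∈ Finset.range (k+1), B i, pmax L k (e x) := by rw [hBunion]
      rw [h1, integral_biUnion_finset _ (fun i _ => hBmeas i) hBdisj
        (fun i _ => (hPmaxOnA k).mono_set (hBsubA i))]
      apply Finset.sum_congr rfl
      intro i _
      apply integral_congr_ae
      have hh : ∀ᵐ x ∂(volume.restrict (B i)), e x = e' x :=
        ae_restrict_of_ae_restrict_of_subset (hBsubA i) hee'A
      filter_upwards [hh, ae_restrict_mem (hBmeas i)] with x hx hxB
      rw [hx]
      exact hxB.2.1
    -- termwise bound
    have hSle : ∀ n, (∑ i ∈ Finset.range (k+1), ∫ x in An n ∩ B i, (⟪v i, en n x⟫ + c i))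
        ≤ ∫ x in An n, f (en n x) := by
      intro n
      have step1 : ∀ i ∈ Finset.range (k+1),
          (∫ x in An n ∩ B i, (⟪v i, en n x⟫ + c i)) ≤ ∫ x in An n ∩ B i, f (en n x) := by
        intro i _
        apply setIntegral_mono_on
          ((((hEnOn n).mono_set inter_subset_left).const_inner _).add
            (integrableOn_const (C := c i) (hvolfin _ (fun x hx => hAnΩ n hx.1)).ne))
          ((hFenOn n).mono_set inter_subset_left)
          ((hAn n).inter (hBmeas i))
        intro x hx
        exact hle i (en n x)
      calc (∑ i ∈ Finset.range (k+1), ∫ x in An n ∩ B i, (⟪v i, en n x⟫ + c i))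
          ≤ ∑ i ∈ Finset.range (k+1), ∫ x in An n ∩ B i, f (en n x) :=
            Finset.sum_le_sum step1
        _ = ∫ x in ⋃ i ∈ Finset.range (k+1), (An n ∩ B i), f (en n x) :=
            (integral_biUnion_finset _ (fun i _ => (hAn n).inter (hBmeas i))
              (fun i hi j hj hij =>
                ((hdisj i j hij).mono inter_subset_right inter_subset_right))
              (fun i _ => (hFenOn n).mono_set inter_subset_left)).symm
        _ = ∫ x in An n ∩ A, f (en n x) := by
            rw [show (⋃ i ∈ Finset.range (k+1), (An n ∩ B i)) = An n ∩ A by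
              rw [← inter_iUnion₂, hBunion]]
        _ ≤ ∫ x in An n, f (en n x) := by
            apply setIntegral_mono_set (hFenOn n) (ae_of_all _ fun x => hnonneg _)
            exact HasSubset.Subset.eventuallyLE inter_subset_left
    -- conclude
    rw [hTeq, ← hSn_tendsto.liminf_eq]
    exact liminf_le_liminf (Eventually.of_forall hSle) hSn_tendsto.isBoundedUnder_ge hcob
  -- dominated convergence in k
  have hDCT : Tendsto (fun k => ∫ x in A, pmax L k (e x)) atTop
      (nhds (∫ x in A, f (e x))) := by
    apply tendsto_integral_of_dominated_convergence (fun x => f (e x) + |⟪v 0, e x⟫ + c 0|)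
      hPmaxASM hGbound
    · exact fun k => ae_of_all _ fun x => by rw [Real.norm_eq_abs]; exact hpmax_bound k x
    · exact ae_of_all _ fun x => pmax_tendsto hle happrox (e x)
  exact le_of_tendsto hDCT (Eventually.of_forall key)
end
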